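/- Let A ∈ ℝ^{n_f×n_f}, B, B̂ ∈ ℝ^{n_f×n_u}, C ∈ ℝ^{n_x×n_f}, γ > 0, and let X ∈ ℝ^{n_f×n_f} be symmetric positive definite with P = γ X^{-1}. Then the 4×4 block matrix M = [[X, A X, B − B̂, 0], [X Aᵀ, X, 0, X Cᵀ], [Bᵀ − B̂ᵀ, 0, γ I_{n_u}, 0], [0, C X, 0, γ I_{n_x}]] is positive definite if and only if for all (e, u) ∈ ℝ^{n_f} × ℝ^{n_u} with (e, u) ≠ (0, 0), (A e + (B − B̂) u)ᵀ P (A e + (B − B̂) u) − eᵀ P e + ‖C e‖₂² − γ² ‖u‖₂² < 0. -/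

import Mathlib

open Matrix

/-- The ℓ₂-gain synthesis LMI: with `P = γ X⁻¹` (`X` symmetric positive definite), the
block matrix `[[X, AX, B−B̂, 0], [XAᵀ, X, 0, XCᵀ], [Bᵀ−B̂ᵀ, 0, γI, 0], [0, CX, 0, γI]]`
is positive definite iff the quadratic dissipation inequality
`(Ae + (B−B̂)u)ᵀ P (Ae + (B−B̂)u) − eᵀPe + ‖Ce‖₂² − γ²‖u‖₂² < 0` holds for all
`(e,u) ≠ (0,0)`. -/
theorem l2_gain_LMI_iff {nf nu nx : ℕ}
    (A : Matrix (Fin nf) (Fin nf) ℝ)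
    (B Bh : Matrix (Fin nf) (Fin nu) ℝ)
    (C : Matrix (Fin nx) (Fin nf) ℝ)
    (γ : ℝ) (hγ : 0 < γ)
    (X : Matrix (Fin nf) (Fin nf) ℝ) (hX : X.PosDef)
    (P : Matrix (Fin nf) (Fin nf) ℝ) (hP : P = γ • X⁻¹) :
    (Matrix.fromBlocks
        (Matrix.fromBlocks X (A * X) (X * Aᵀ) X)
        (Matrix.fromBlocks (B - Bh) 0 0 (X * Cᵀ))
        (Matrix.fromBlocks (Bᵀ - Bhᵀ) 0 0 (C * X))
        (Matrix.fromBlocks (γ • (1 : Matrix (Fin nu) (Fin nu) ℝ)) 0 0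
          (γ • (1 : Matrix (Fin nx) (Fin nx) ℝ)))).PosDef
    ↔ ∀ (e : Fin nf → ℝ) (u : Fin nu → ℝ), (e ≠ 0 ∨ u ≠ 0) →
        (A.mulVec e + (B - Bh).mulVec u) ⬝ᵥ
            P.mulVec (A.mulVec e + (B - Bh).mulVec u)
          - e ⬝ᵥ P.mulVec e
          + (C.mulVec e) ⬝ᵥ (C.mulVec e)
          - γ ^ 2 * (u ⬝ᵥ u) < 0 := by
  subst hP
  have hγ0 : γ ≠ 0 := hγ.ne'
  have hγ' : (0:ℝ) < γ⁻¹ := inv_pos.mpr hγ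
  have hdet : IsUnit X.det := isUnit_iff_ne_zero.mpr hX.det_pos.ne'
  have hXX : X * X⁻¹ = 1 := Matrix.mul_nonsing_inv X hdet
  have hIX : X⁻¹ * X = 1 := Matrix.nonsing_inv_mul X hdet
  have hXs : Xᵀ = X := by
    have := hX.isHermitian
    rwa [Matrix.IsHermitian, Matrix.conjTranspose_eq_transpose_of_trivial] at this
  have hXis : (X⁻¹)ᵀ = X⁻¹ := by
    rw [Matrix.transpose_nonsing_inv, hXs]
  have hXcancel : ∀ v : Fin nf → ℝ, X *ᵥ (X⁻¹ *ᵥ v) = v := fun v => by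
    rw [Matrix.mulVec_mulVec, hXX, Matrix.one_mulVec]
  have hIXcancel : ∀ v : Fin nf → ℝ, X⁻¹ *ᵥ (X *ᵥ v) = v := fun v => by
    rw [Matrix.mulVec_mulVec, hIX, Matrix.one_mulVec]
  have dpt : ∀ {m k : ℕ} (M : Matrix (Fin m) (Fin k) ℝ) (a : Fin m → ℝ) (b : Fin k → ℝ),
      a ⬝ᵥ (M *ᵥ b) = (Mᵀ *ᵥ a) ⬝ᵥ b := fun M a b => by
    rw [Matrix.dotProduct_mulVec, Matrix.mulVec_transpose]
  have dpsn : ∀ {k : ℕ} (v : Fin k → ℝ), 0 ≤ v ⬝ᵥ v := fun v =>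
    Finset.sum_nonneg fun i _ => mul_self_nonneg _
  have dpsp : ∀ {k : ℕ} (v : Fin k → ℝ), v ≠ 0 → 0 < v ⬝ᵥ v := by
    intro k v hv
    rcases (dpsn v).lt_or_eq with h | h
    · exact h
    · exfalso
      apply hv
      funext i
      have h2 : ∑ j, v j * v j = 0 := h.symm
      have := (Finset.sum_eq_zero_iff_of_nonneg
        (fun j _ => mul_self_nonneg (v j))).mp h2 i (Finset.mem_univ i)
      exact mul_self_eq_zero.mp this
  have Xnn : ∀ v : Fin nf → ℝ, 0 ≤ v ⬝ᵥ (X *ᵥ v) := fun v => by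
    simpa using (Matrix.posSemidef_iff_dotProduct_mulVec.mp hX.posSemidef).2 v
  have Xpos : ∀ v : Fin nf → ℝ, v ≠ 0 → 0 < v ⬝ᵥ (X *ᵥ v) := fun v hv => by
    simpa using (Matrix.posDef_iff_dotProduct_mulVec.mp hX).2 hv
  have hΔT : Bᵀ - Bhᵀ = (B - Bh)ᵀ := (Matrix.transpose_sub B Bh).symm
  rw [hΔT]
  set Δ := B - Bh with hΔdef
  -- master identity
  have master : ∀ (x y : Fin nf → ℝ) (u : Fin nu → ℝ) (w : Fin nx → ℝ),
      (Sum.elim (Sum.elim x y) (Sum.elim u w)) ⬝ᵥ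
          ((Matrix.fromBlocks (Matrix.fromBlocks X (A * X) (X * Aᵀ) X)
            (Matrix.fromBlocks Δ 0 0 (X * Cᵀ))
            (Matrix.fromBlocks Δᵀ 0 0 (C * X))
            (Matrix.fromBlocks (γ • (1 : Matrix (Fin nu) (Fin nu) ℝ)) 0 0
              (γ • (1 : Matrix (Fin nx) (Fin nx) ℝ)))) *ᵥ
            (Sum.elim (Sum.elim x y) (Sum.elim u w)))
      = (x + X⁻¹ *ᵥ (A *ᵥ (X *ᵥ y) + Δ *ᵥ u)) ⬝ᵥ (X *ᵥ (x + X⁻¹ *ᵥ (A *ᵥ (X *ᵥ y) + Δ *ᵥ u)))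
        + γ * ((w + γ⁻¹ • (C *ᵥ (X *ᵥ y))) ⬝ᵥ (w + γ⁻¹ • (C *ᵥ (X *ᵥ y))))
        - γ⁻¹ * ((A *ᵥ (X *ᵥ y) + Δ *ᵥ u) ⬝ᵥ ((γ • X⁻¹) *ᵥ (A *ᵥ (X *ᵥ y) + Δ *ᵥ u))
            - (X *ᵥ y) ⬝ᵥ ((γ • X⁻¹) *ᵥ (X *ᵥ y))
            + (C *ᵥ (X *ᵥ y)) ⬝ᵥ (C *ᵥ (X *ᵥ y))
            - γ ^ 2 * (u ⬝ᵥ u)) := by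
    intro x y u w
    have cInvXX : ∀ (a b : Fin nf → ℝ), (X⁻¹ *ᵥ a) ⬝ᵥ (X *ᵥ b) = b ⬝ᵥ a := fun a b => by
      rw [dotProduct_comm, dpt, hXis, hIXcancel]
    have cSymInv : ∀ (a b : Fin nf → ℝ), a ⬝ᵥ (X⁻¹ *ᵥ b) = b ⬝ᵥ (X⁻¹ *ᵥ a) := fun a b => by
      rw [dpt, hXis, dotProduct_comm]
    simp only [Matrix.fromBlocks_mulVec, sumElim_dotProduct_sumElim,
      Sum.elim_comp_inl, Sum.elim_comp_inr,
      Matrix.zero_mulVec, Matrix.mulVec_zero, add_zero, zero_add,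
      dotProduct_add, add_dotProduct, Matrix.mulVec_add,
      Matrix.smul_mulVec, Matrix.one_mulVec,
      dotProduct_smul, smul_dotProduct, ← Matrix.mulVec_mulVec,
      hXcancel, hIXcancel, smul_eq_mul]
    rw [show y ⬝ᵥ X *ᵥ Aᵀ *ᵥ x = x ⬝ᵥ A *ᵥ X *ᵥ y by
        rw [dpt, hXs, dpt, Matrix.transpose_transpose, dotProduct_comm, Matrix.mulVec_mulVec]]
    rw [show y ⬝ᵥ X *ᵥ Cᵀ *ᵥ w = w ⬝ᵥ C *ᵥ X *ᵥ y by
          rw [dpt X, hXs, dpt Cᵀ, Matrix.transpose_transpose, Matrix.mulVec_mulVec,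
            dotProduct_comm, ← Matrix.mulVec_mulVec],
        show u ⬝ᵥ Δᵀ *ᵥ x = x ⬝ᵥ Δ *ᵥ u by
          rw [dpt, Matrix.transpose_transpose, dotProduct_comm],
        cInvXX (A *ᵥ X *ᵥ y) x, cInvXX (Δ *ᵥ u) x,
        dotProduct_comm (X⁻¹ *ᵥ A *ᵥ X *ᵥ y) (A *ᵥ X *ᵥ y),
        dotProduct_comm (X⁻¹ *ᵥ Δ *ᵥ u) (A *ᵥ X *ᵥ y),
        dotProduct_comm (X⁻¹ *ᵥ A *ᵥ X *ᵥ y) (Δ *ᵥ u),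
        dotProduct_comm (X⁻¹ *ᵥ Δ *ᵥ u) (Δ *ᵥ u),
        dotProduct_comm (C *ᵥ X *ᵥ y) w,
        dotProduct_comm (X *ᵥ y) y,
        cSymInv (A *ᵥ X *ᵥ y) (Δ *ᵥ u)]
    field_simp
    ring
  constructor
  · intro hM e u hne
    set s := A *ᵥ e + Δ *ᵥ u with hs
    set z := Sum.elim (Sum.elim (-(X⁻¹ *ᵥ s)) (X⁻¹ *ᵥ e)) (Sum.elim u (-(γ⁻¹ • (C *ᵥ e))))
      with hz
    have hznz : z ≠ 0 := by
      intro h0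
      have hy0 : X⁻¹ *ᵥ e = 0 := funext fun i => congrFun h0 (Sum.inl (Sum.inr i))
      have he0 : e = 0 := by rw [← hXcancel e, hy0, Matrix.mulVec_zero]
      have hu0 : u = 0 := funext fun i => congrFun h0 (Sum.inr (Sum.inl i))
      rcases hne with h | h
      · exact h he0
      · exact h hu0
    have key := (Matrix.posDef_iff_dotProduct_mulVec.mp hM).2 hznz
    rw [show star z = z from star_trivial z] at key
    have hmq := master (-(X⁻¹ *ᵥ s)) (X⁻¹ *ᵥ e) u (-(γ⁻¹ • (C *ᵥ e)))
    rw [hXcancel e] at hmq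
    rw [← hs] at hmq
    rw [hz] at key
    rw [hmq] at key
    rw [neg_add_cancel, neg_add_cancel] at key
    rw [Matrix.mulVec_zero, dotProduct_zero, zero_dotProduct] at key
    have hQ : s ⬝ᵥ ((γ • X⁻¹) *ᵥ s) - e ⬝ᵥ ((γ • X⁻¹) *ᵥ e)
        + (C *ᵥ e) ⬝ᵥ (C *ᵥ e) - γ ^ 2 * (u ⬝ᵥ u) < 0 := by nlinarith
    exact hQ
  · intro h
    rw [Matrix.posDef_iff_dotProduct_mulVec]
    constructor
    · show _ᴴ = _
      rw [Matrix.conjTranspose_eq_transpose_of_trivial]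
      simp only [Matrix.fromBlocks_transpose, Matrix.transpose_mul,
        Matrix.transpose_transpose, Matrix.transpose_zero, Matrix.transpose_smul,
        Matrix.transpose_one, hXs]
    · intro z hz
      rw [show star z = z from star_trivial z]
      have hzd : z = Sum.elim
          (Sum.elim (fun i => z (Sum.inl (Sum.inl i))) (fun i => z (Sum.inl (Sum.inr i))))
          (Sum.elim (fun i => z (Sum.inr (Sum.inl i))) (fun i => z (Sum.inr (Sum.inr i)))) := by
        funext i
        rcases i with (i | i) | (i | i) <;> rfl
      set x := fun i => z (Sum.inl (Sum.inl i)) with hxd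
      set y := fun i => z (Sum.inl (Sum.inr i)) with hyd
      set u := fun i => z (Sum.inr (Sum.inl i)) with hud
      set w := fun i => z (Sum.inr (Sum.inr i)) with hwd
      rw [hzd, master x y u w]
      by_cases hyu : y = 0 ∧ u = 0
      · -- then x ≠ 0 or w ≠ 0
        have hxw : x ≠ 0 ∨ w ≠ 0 := by
          by_contra hc
          push_neg at hc
          apply hz
          rw [hzd, hyu.1, hyu.2, hc.1, hc.2]
          funext i
          rcases i with (i | i) | (i | i) <;> rfl
        rw [hyu.1, hyu.2]
        simp only [Matrix.mulVec_zero, dotProduct_zero, zero_dotProduct,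
          add_zero, zero_add, smul_zero, dotProduct_smul, smul_eq_mul,
          mul_zero, zero_sub, sub_zero, zero_dotProduct, dotProduct_zero,
          mul_self_nonneg, neg_zero, sub_self]
        have h1 : 0 ≤ x ⬝ᵥ (X *ᵥ x) := Xnn x
        have h2 : 0 ≤ w ⬝ᵥ w := dpsn w
        rcases hxw with hx | hw
        · have := Xpos x hx
          nlinarith
        · have := dpsp w hw
          nlinarith
      · have heu : X *ᵥ y ≠ 0 ∨ u ≠ 0 := by
          rcases Classical.em (y = 0) with hy | hy
          · right
            intro hu
            exact hyu ⟨hy, hu⟩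
          · left
            intro he
            apply hy
            rw [← hIXcancel y, he, Matrix.mulVec_zero]
        have hQ := h (X *ᵥ y) u heu
        have h1 : 0 ≤ (x + X⁻¹ *ᵥ (A *ᵥ (X *ᵥ y) + Δ *ᵥ u)) ⬝ᵥ
            (X *ᵥ (x + X⁻¹ *ᵥ (A *ᵥ (X *ᵥ y) + Δ *ᵥ u))) := Xnn _
        have h2 : 0 ≤ (w + γ⁻¹ • (C *ᵥ (X *ᵥ y))) ⬝ᵥ (w + γ⁻¹ • (C *ᵥ (X *ᵥ y))) := dpsn _
        nlinarith
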